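/- Let p, w ∈ AP₊(ℝ,ℝ) and q : ℝ → ℝ Bohr almost periodic, with v = (1/p, q, w). Then the rotation number λ ↦ ρ(λ, v) is a continuous function of λ ∈ ℝ. -/

import Mathlib

open Filter Topology MeasureTheory Set

noncomputable section

/-- A continuous function `f : ℝ → E` is Bohr almost periodic if every sequence of reals
has a subsequence along which the translates converge uniformly on `ℝ`. -/
def BohrAP {E : Type*} [NormedAddCommGroup E] (f : ℝ → E) : Prop :=
  Continuous f ∧ ∀ t : ℕ → ℝ, ∃ (s : ℕ → ℕ) (g : ℝ → E),
    StrictMono s ∧ TendstoUniformly (fun n x => f (x + t (s n))) g atTop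

/-- The hull of `f`: uniform limits of sequences of translates of `f`. -/
def Hull {E : Type*} [NormedAddCommGroup E] (f : ℝ → E) : Set (ℝ → E) :=
  {g | ∃ t : ℕ → ℝ, TendstoUniformly (fun n x => f (x + t n)) g atTop}

/-- `AP₊(ℝ,ℝ)`: Bohr almost periodic functions all of whose hull elements are
strictly positive at every point. -/
def APplus (f : ℝ → ℝ) : Prop :=
  BohrAP f ∧ ∀ g ∈ Hull f, ∀ x : ℝ, 0 < g x

/-- The set of Fourier exponents of `f`: those `l` for which the Fourier coefficient
`lim_{T→∞} (1/T) ∫₀^T f(x) e^{-i l x} dx` is nonzero (encoded as: the averages do not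
tend to `0`; for Bohr almost periodic `f` the limit always exists). -/
def freqSet (f : ℝ → ℝ) : Set ℝ :=
  {l : ℝ | ¬ Tendsto
      (fun T : ℝ => (T : ℂ)⁻¹ *
        ∫ x in (0:ℝ)..T, (f x : ℂ) * Complex.exp (-(Complex.I * (l : ℂ) * (x : ℂ))))
      atTop (𝓝 0)}

/-- The frequency module of `f`: the smallest additive subgroup of `ℝ` containing the
Fourier exponents of `f`. -/
def freqModule (f : ℝ → ℝ) : AddSubgroup ℝ := AddSubgroup.closure (freqSet f)

/-- `θ` solves the Prüfer equation `θ' = a cos²θ + (λ w - q) sin²θ`. -/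
def IsPruefer (a q w : ℝ → ℝ) (lam : ℝ) (θ : ℝ → ℝ) : Prop :=
  ∀ x : ℝ, HasDerivAt θ
    (a x * Real.cos (θ x) ^ 2 + (lam * w x - q x) * Real.sin (θ x) ^ 2) x

/-- `φ` is a (real) solution of the Sturm–Liouville equation `-(pφ')' + qφ = λ w φ`:
`φ` is `C¹`, `pφ'` is `C¹`, and the equation holds everywhere. -/
def IsSLSolution (p q w : ℝ → ℝ) (lam : ℝ) (φ : ℝ → ℝ) : Prop :=
  ContDiff ℝ 1 φ ∧ ContDiff ℝ 1 (fun x => p x * deriv φ x) ∧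
    ∀ x : ℝ, -(deriv (fun y => p y * deriv φ y) x) + q x * φ x = lam * w x * φ x

lemma bohrAP_bounded {f : ℝ → ℝ} (hf : BohrAP f) : ∃ M : ℝ, ∀ x, |f x| ≤ M := by
  by_contra hcon
  push_neg at hcon
  choose t ht using fun n : ℕ => hcon (n : ℝ)
  obtain ⟨s, g, hs, hg⟩ := hf.2 t
  have h0 : Tendsto (fun n => f (0 + t (s n))) atTop (𝓝 (g 0)) := hg.tendsto_at 0
  have h1 : ∀ᶠ n in atTop, |f (0 + t (s n))| ≤ |g 0| + 1 :=
    h0.abs.eventually (eventually_le_nhds (lt_add_one _))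
  have h2 : ∀ᶠ n : ℕ in atTop, |g 0| + 1 < (n : ℝ) :=
    tendsto_natCast_atTop_atTop.eventually_gt_atTop (|g 0| + 1)
  obtain ⟨n, hn1, hn2⟩ := (h1.and h2).exists
  have h3 : (n : ℝ) ≤ (s n : ℝ) := Nat.cast_le.mpr hs.le_apply
  have h4 := ht (s n)
  simp only [zero_add] at hn1
  linarith

lemma apPlus_pos_lb {f : ℝ → ℝ} (hf : APplus f) : ∃ m > 0, ∀ x, m ≤ f x := by
  by_contra hcon
  push_neg at hcon
  choose t ht using fun n : ℕ => hcon ((n : ℝ) + 1)⁻¹ (by positivity)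
  obtain ⟨s, g, hs, hg⟩ := hf.1.2 t
  have hmem : g ∈ Hull f := ⟨fun n => t (s n), hg⟩
  have hpos := hf.2 g hmem 0
  have h0 : Tendsto (fun n => f (0 + t (s n))) atTop (𝓝 (g 0)) := hg.tendsto_at 0
  have hz : Tendsto (fun n : ℕ => ((n : ℝ) + 1)⁻¹) atTop (𝓝 0) := by
    simpa [one_div] using tendsto_one_div_add_atTop_nhds_zero_nat (𝕜 := ℝ)
  have h1 : g 0 ≤ 0 := by
    refine le_of_tendsto_of_tendsto h0 hz (Eventually.of_forall fun n => ?_)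
    have h3 : ((n : ℝ) + 1)⁻¹ ≥ ((s n : ℝ) + 1)⁻¹ := by
      have : (n : ℝ) ≤ (s n : ℝ) := Nat.cast_le.mpr hs.le_apply
      apply inv_anti₀ (by positivity) (by linarith)
    have h4 := ht (s n)
    simp only [zero_add]
    linarith
  linarith

lemma sin_sq_sub (A B : ℝ) :
    Real.sin A ^ 2 - Real.sin B ^ 2 = Real.sin (A + B) * Real.sin (A - B) := by
  have h1 := Real.sin_sq_add_cos_sq A
  have h2 := Real.sin_sq_add_cos_sq B
  rw [Real.sin_add, Real.sin_sub]
  linear_combination Real.sin B ^ 2 * h1 - Real.sin A ^ 2 * h2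

lemma rot_key (C eps : ℝ) (hC : 0 < C) (heps : 0 < eps)
    (Δ Δ' : ℝ → ℝ) (hΔ : ∀ x, HasDerivAt Δ (Δ' x) x)
    (hb : ∀ x, |Δ' x| ≤ C * |Real.sin (Δ x)| + eps)
    (D : ℝ) (hlim : Tendsto (fun x => (Δ x - Δ 0) / x) atTop (𝓝 D)) :
    |D| ≤ Real.pi / (∫ u in (0:ℝ)..Real.pi, (C * |Real.sin u| + eps)⁻¹) := by
  set h : ℝ → ℝ := fun u => (C * |Real.sin u| + eps)⁻¹ with hh
  have hden : ∀ u : ℝ, 0 < C * |Real.sin u| + eps := fun u => by positivity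
  have hcont : Continuous h := by
    apply Continuous.inv₀
    · fun_prop
    · exact fun u => (hden u).ne'
  have hint : ∀ a b : ℝ, IntervalIntegrable h volume a b := fun a b =>
    hcont.intervalIntegrable a b
  set V : ℝ → ℝ := fun d => ∫ u in (0:ℝ)..d, h u with hV
  set T : ℝ := V Real.pi with hTdef
  rw [show (∫ u in (0:ℝ)..Real.pi, (C * |Real.sin u| + eps)⁻¹) = T from rfl]
  have hpos : ∀ u, 0 < h u := fun u => inv_pos.2 (hden u)
  have hVd : ∀ d, HasDerivAt V (h d) d := fun d =>
    intervalIntegral.integral_hasDerivAt_right (hint 0 d)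
      (hcont.stronglyMeasurableAtFilter _ _) hcont.continuousAt
  have hVmono : Monotone V :=
    monotone_of_deriv_nonneg (fun d => (hVd d).differentiableAt)
      (fun d => by rw [(hVd d).deriv]; exact (hpos d).le)
  have hper : Function.Periodic h Real.pi := by
    intro u
    simp [hh, Real.sin_add_pi]
  have hstep : ∀ d : ℝ, V (d + Real.pi) = V d + T := by
    intro d
    have h1 : (∫ u in (0:ℝ)..d, h u) + ∫ u in d..(d + Real.pi), h u
        = ∫ u in (0:ℝ)..(d + Real.pi), h u :=
      intervalIntegral.integral_add_adjacent_intervals (hint 0 d) (hint d _)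
    have h2 : (∫ u in d..(d + Real.pi), h u) = T := by
      have := hper.intervalIntegral_add_eq d 0
      simpa [hTdef, hV] using this
    simp only [hV] at h1 ⊢
    linarith [h1]
  have hkstep : ∀ (k : ℕ) (d : ℝ), V (d + k * Real.pi) = V d + k * T := by
    intro k
    induction k with
    | zero => simp
    | succ n ih =>
      intro d
      have he : d + ((n : ℝ) + 1) * Real.pi = (d + n * Real.pi) + Real.pi := by ring
      push_cast
      rw [he, hstep, ih]
      ring
  have hTpos : 0 < T := by
    rw [hTdef, hV]
    exact intervalIntegral.intervalIntegral_pos_of_pos_on (hint 0 _)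
      (fun u _ => hpos u) Real.pi_pos
  -- V ∘ Δ is 1-Lipschitz (via derivative bounds)
  have hGd : ∀ y : ℝ, HasDerivAt (fun z => V (Δ z)) (h (Δ y) * Δ' y) y := fun y =>
    (hVd (Δ y)).comp y (hΔ y)
  have hG1 : ∀ y, |h (Δ y) * Δ' y| ≤ 1 := by
    intro y
    rw [abs_mul, abs_of_pos (hpos _)]
    calc h (Δ y) * |Δ' y| ≤ h (Δ y) * (C * |Real.sin (Δ y)| + eps) :=
          mul_le_mul_of_nonneg_left (hb y) (hpos _).le
      _ = 1 := inv_mul_cancel₀ (hden _).ne'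
  have hup : ∀ x : ℝ, 0 ≤ x → V (Δ x) ≤ V (Δ 0) + x := by
    intro x hx
    have hanti : Antitone (fun z => V (Δ z) - z) := by
      apply antitone_of_deriv_nonpos
      · exact fun z => ((hGd z).sub (hasDerivAt_id' z)).differentiableAt
      · intro z
        rw [HasDerivAt.deriv (f := fun z => V (Δ z) - z) ((hGd z).sub (hasDerivAt_id' z))]
        have := (abs_le.1 (hG1 z)).2
        linarith
    have := hanti hx
    simp only at this
    linarith
  have hlo : ∀ x : ℝ, 0 ≤ x → V (Δ 0) - x ≤ V (Δ x) := by
    intro x hx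
    have hmono : Monotone (fun z => V (Δ z) + z) := by
      apply monotone_of_deriv_nonneg
      · exact fun z => ((hGd z).add (hasDerivAt_id' z)).differentiableAt
      · intro z
        rw [HasDerivAt.deriv (f := fun z => V (Δ z) + z) ((hGd z).add (hasDerivAt_id' z))]
        have := (abs_le.1 (hG1 z)).1
        linarith
    have := hmono hx
    simp only at this
    linarith
  -- counting bound
  have hcount : ∀ x : ℝ, 0 < x → |Δ x - Δ 0| ≤ (x / T + 1) * Real.pi := by
    intro x hx
    set k : ℕ := Nat.floor (x / T) + 1 with hk
    have hk1 : (k : ℝ) ≤ x / T + 1 := by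
      have := Nat.floor_le (le_of_lt (div_pos hx hTpos))
      rw [hk]
      push_cast
      linarith
    have hk2 : x < (k : ℝ) * T := by
      have h1 : x / T < (Nat.floor (x / T) : ℝ) + 1 := Nat.lt_floor_add_one _
      have h2 : x / T * T = x := div_mul_cancel₀ x hTpos.ne'
      rw [hk]
      push_cast
      nlinarith
    rw [abs_le]
    constructor
    · by_contra hcc
      push_neg at hcc
      have h5 : Δ x + k * Real.pi ≤ Δ 0 := by nlinarith [Real.pi_pos, hk1]
      have h8 := hVmono h5
      rw [hkstep k (Δ x)] at h8
      have h7 := hlo x hx.le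
      linarith
    · by_contra hcc
      push_neg at hcc
      have h5 : Δ 0 + k * Real.pi ≤ Δ x := by nlinarith [Real.pi_pos, hk1]
      have h8 := hVmono h5
      rw [hkstep k (Δ 0)] at h8
      have h7 := hup x hx.le
      linarith
  -- pass to the limit
  have hev : ∀ᶠ x : ℝ in atTop, |(Δ x - Δ 0) / x| ≤ Real.pi / T + Real.pi * x⁻¹ := by
    filter_upwards [eventually_gt_atTop (0:ℝ)] with x hx
    rw [abs_div, abs_of_pos hx, div_le_iff₀ hx]
    calc |Δ x - Δ 0| ≤ (x / T + 1) * Real.pi := hcount x hx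
      _ = (Real.pi / T + Real.pi * x⁻¹) * x := by field_simp
  have hrhs : Tendsto (fun x : ℝ => Real.pi / T + Real.pi * x⁻¹) atTop (𝓝 (Real.pi / T)) := by
    have h1 : Tendsto (fun x : ℝ => Real.pi * x⁻¹) atTop (𝓝 0) := by
      simpa using tendsto_inv_atTop_zero.const_mul Real.pi
    simpa using tendsto_const_nhds.add h1
  have h1 : D ≤ Real.pi / T :=
    le_of_tendsto_of_tendsto hlim hrhs
      (hev.mono fun x hx => le_trans (le_abs_self _) hx)
  have h2 : -(Real.pi / T) ≤ D := by
    have hrhs' : Tendsto (fun x : ℝ => -(Real.pi / T + Real.pi * x⁻¹)) atTop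
        (𝓝 (-(Real.pi / T))) := hrhs.neg
    refine le_of_tendsto_of_tendsto hrhs' hlim (hev.mono fun x hx => ?_)
    have := (abs_le.1 hx).1
    linarith
  exact abs_le.2 ⟨h2, h1⟩

lemma rot_T_lb (C eps : ℝ) (hC : 0 < C) (heps : 0 < eps) :
    (1 / C) * Real.log (C * Real.pi / (2 * eps)) ≤
      ∫ u in (0:ℝ)..Real.pi, (C * |Real.sin u| + eps)⁻¹ := by
  have hpi := Real.pi_pos
  have hden : ∀ u : ℝ, 0 < C * |Real.sin u| + eps := fun u => by positivity
  have hcont : Continuous fun u : ℝ => (C * |Real.sin u| + eps)⁻¹ := by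
    apply Continuous.inv₀
    · fun_prop
    · exact fun u => (hden u).ne'
  have hint : ∀ a b : ℝ, IntervalIntegrable (fun u : ℝ => (C * |Real.sin u| + eps)⁻¹)
      volume a b := fun a b => hcont.intervalIntegrable a b
  have hintlin : IntervalIntegrable (fun u : ℝ => (C * u + eps)⁻¹) volume 0 (Real.pi / 2) := by
    apply ContinuousOn.intervalIntegrable
    apply ContinuousOn.inv₀
    · fun_prop
    · intro u hu
      rw [Set.uIcc_of_le (by positivity)] at hu
      have := hu.1
      positivity
  -- step 1: compare with the linear-denominator integral on [0, π/2]
  have h1 : (∫ u in (0:ℝ)..(Real.pi / 2), (C * u + eps)⁻¹)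
      ≤ ∫ u in (0:ℝ)..(Real.pi / 2), (C * |Real.sin u| + eps)⁻¹ := by
    apply intervalIntegral.integral_mono_on (by positivity) hintlin (hint 0 _)
    intro u hu
    have hu0 : (0:ℝ) ≤ u := hu.1
    have hsin : |Real.sin u| ≤ u := by
      rcases eq_or_lt_of_le hu0 with hz | hz
      · simp [← hz]
      · rw [abs_of_nonneg (Real.sin_nonneg_of_nonneg_of_le_pi hu0 (by linarith [hu.2]))]
        exact (Real.sin_lt hz).le
    exact inv_anti₀ (hden u) (by nlinarith)
  -- step 2: compute the linear integral
  have h2 : (∫ u in (0:ℝ)..(Real.pi / 2), (C * u + eps)⁻¹)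
      = (1 / C) * (Real.log (C * (Real.pi / 2) + eps) - Real.log eps) := by
    have hderiv : ∀ u ∈ Set.uIcc (0:ℝ) (Real.pi / 2),
        HasDerivAt (fun v => (1 / C) * Real.log (C * v + eps)) ((C * u + eps)⁻¹) u := by
      intro u hu
      rw [Set.uIcc_of_le (by positivity)] at hu
      have hu0 : (0:ℝ) ≤ u := hu.1
      have hposu : 0 < C * u + eps := by positivity
      have hlin : HasDerivAt (fun v : ℝ => C * v + eps) C u := by
        simpa using ((hasDerivAt_id u).const_mul C).add_const eps
      have hlog := (Real.hasDerivAt_log hposu.ne').comp u hlin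
      have := hlog.const_mul (1 / C)
      refine this.congr_deriv ?_
      field_simp
    rw [intervalIntegral.integral_eq_sub_of_hasDerivAt hderiv hintlin]
    rw [mul_zero, zero_add]
    ring
  -- step 3: the full integral dominates the one on [0, π/2]
  have h3 : (∫ u in (0:ℝ)..(Real.pi / 2), (C * |Real.sin u| + eps)⁻¹)
      ≤ ∫ u in (0:ℝ)..Real.pi, (C * |Real.sin u| + eps)⁻¹ := by
    have hadd := intervalIntegral.integral_add_adjacent_intervals
      (hint 0 (Real.pi / 2)) (hint (Real.pi / 2) Real.pi)
    have hnn : 0 ≤ ∫ u in (Real.pi / 2)..Real.pi, (C * |Real.sin u| + eps)⁻¹ :=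
      intervalIntegral.integral_nonneg (by linarith) (fun u _ => (inv_pos.2 (hden u)).le)
    linarith
  -- step 4: log comparison
  have h4 : (1 / C) * Real.log (C * Real.pi / (2 * eps))
      ≤ (1 / C) * (Real.log (C * (Real.pi / 2) + eps) - Real.log eps) := by
    have hl : Real.log (C * Real.pi / (2 * eps))
        ≤ Real.log (C * (Real.pi / 2) + eps) - Real.log eps := by
      rw [show C * Real.pi / (2 * eps) = (C * (Real.pi / 2)) / eps by ring,
        Real.log_div (by positivity) heps.ne']
      have : Real.log (C * (Real.pi / 2)) ≤ Real.log (C * (Real.pi / 2) + eps) := by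
        gcongr
        linarith
      linarith
    exact mul_le_mul_of_nonneg_left hl (by positivity)
  linarith

/-- the rotation number is continuous in `λ`. -/
theorem rotation_number_continuous (p q w : ℝ → ℝ)
    (hp : APplus p) (hw : APplus w) (hq : BohrAP q) (ρ : ℝ → ℝ)
    (hρ : ∀ lam : ℝ, ∃ θ : ℝ → ℝ, IsPruefer (fun x => (p x)⁻¹) q w lam θ ∧
      Tendsto (fun x => (θ x - θ 0) / x) atTop (𝓝 (ρ lam))) :
    Continuous ρ := by
  have hpi := Real.pi_pos
  obtain ⟨Mq, hMq⟩ := bohrAP_bounded hq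
  obtain ⟨Mw, hMw⟩ := bohrAP_bounded hw.1
  obtain ⟨m, hm, hmp⟩ := apPlus_pos_lb hp
  have hMq0 : 0 ≤ Mq := le_trans (abs_nonneg _) (hMq 0)
  have hMw0 : 0 ≤ Mw := le_trans (abs_nonneg _) (hMw 0)
  have hainv : ∀ x, |(p x)⁻¹| ≤ m⁻¹ := by
    intro x
    have hpx : 0 < p x := lt_of_lt_of_le hm (hmp x)
    rw [abs_of_pos (inv_pos.2 hpx)]
    exact inv_anti₀ hm (hmp x)
  rw [Metric.continuous_iff]
  intro l₀ ε hε
  set W : ℝ := Mw + 1 with hWdef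
  have hW : 0 < W := by linarith
  set C : ℝ := |l₀| * Mw + Mq + m⁻¹ + 1 with hCdef
  have hC : 0 < C := by positivity
  have hCb : ∀ x, |l₀ * w x - q x - (p x)⁻¹| ≤ C := by
    intro x
    have h1 : |l₀ * w x| ≤ |l₀| * Mw := by
      rw [abs_mul]
      exact mul_le_mul_of_nonneg_left (hMw x) (abs_nonneg _)
    calc |l₀ * w x - q x - (p x)⁻¹| ≤ |l₀ * w x - q x| + |(p x)⁻¹| := abs_sub _ _
      _ ≤ |l₀ * w x| + |q x| + |(p x)⁻¹| := by linarith [abs_sub (l₀ * w x) (q x)]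
      _ ≤ C := by
          have := hMq x
          have := hainv x
          rw [hCdef]; linarith
  refine ⟨C * Real.pi / 2 * Real.exp (-(2 * C * Real.pi / ε)) / W, by positivity, ?_⟩
  intro lam hdist
  rw [Real.dist_eq] at hdist ⊢
  rcases eq_or_ne lam l₀ with heq | hne
  · simpa [heq] using hε
  set eps : ℝ := W * |lam - l₀| with hepsdef
  have heps : 0 < eps := mul_pos hW (abs_pos.2 (sub_ne_zero.2 hne))
  obtain ⟨θ₁, hθ₁, hl₁⟩ := hρ l₀
  obtain ⟨θ₂, hθ₂, hl₂⟩ := hρ lam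
  set Δ : ℝ → ℝ := fun x => θ₂ x - θ₁ x with hΔdef
  set Δ' : ℝ → ℝ := fun x =>
    ((p x)⁻¹ * Real.cos (θ₂ x) ^ 2 + (lam * w x - q x) * Real.sin (θ₂ x) ^ 2)
    - ((p x)⁻¹ * Real.cos (θ₁ x) ^ 2 + (l₀ * w x - q x) * Real.sin (θ₁ x) ^ 2) with hΔ'def
  have hΔ : ∀ x, HasDerivAt Δ (Δ' x) x := fun x => (hθ₂ x).sub (hθ₁ x)
  have hbd : ∀ x, |Δ' x| ≤ C * |Real.sin (Δ x)| + eps := by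
    intro x
    have hid : Δ' x = (l₀ * w x - q x - (p x)⁻¹)
          * (Real.sin (θ₂ x + θ₁ x) * Real.sin (θ₂ x - θ₁ x))
        + (lam - l₀) * (w x * Real.sin (θ₂ x) ^ 2) := by
      have e1 := sin_sq_sub (θ₂ x) (θ₁ x)
      rw [hΔ'def]
      simp only [Real.cos_sq']
      linear_combination (l₀ * w x - q x - (p x)⁻¹) * e1
    rw [hid]
    have hS : |Real.sin (θ₂ x + θ₁ x)| ≤ 1 :=
      abs_le.2 ⟨Real.neg_one_le_sin _, Real.sin_le_one _⟩
    have e2 : |(l₀ * w x - q x - (p x)⁻¹)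
        * (Real.sin (θ₂ x + θ₁ x) * Real.sin (θ₂ x - θ₁ x))|
        ≤ C * |Real.sin (θ₂ x - θ₁ x)| := by
      rw [abs_mul, abs_mul, ← mul_assoc]
      have hA : |l₀ * w x - q x - (p x)⁻¹| * |Real.sin (θ₂ x + θ₁ x)| ≤ C := by
        calc |l₀ * w x - q x - (p x)⁻¹| * |Real.sin (θ₂ x + θ₁ x)|
            ≤ |l₀ * w x - q x - (p x)⁻¹| * 1 :=
              mul_le_mul_of_nonneg_left hS (abs_nonneg _)
          _ = _ := mul_one _
          _ ≤ C := hCb x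
      exact mul_le_mul_of_nonneg_right hA (abs_nonneg _)
    have e3 : |(lam - l₀) * (w x * Real.sin (θ₂ x) ^ 2)| ≤ eps := by
      rw [abs_mul]
      have h1 : |w x * Real.sin (θ₂ x) ^ 2| ≤ W := by
        rw [abs_mul, abs_of_nonneg (sq_nonneg (Real.sin (θ₂ x)))]
        calc |w x| * Real.sin (θ₂ x) ^ 2 ≤ W * 1 := by
              apply mul_le_mul _ (Real.sin_sq_le_one _) (sq_nonneg _) hW.le
              · rw [hWdef]; linarith [hMw x]
          _ = W := mul_one _
      calc |lam - l₀| * |w x * Real.sin (θ₂ x) ^ 2| ≤ |lam - l₀| * W :=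
            mul_le_mul_of_nonneg_left h1 (abs_nonneg _)
        _ = eps := by rw [hepsdef]; ring
    calc |_ + _| ≤ _ + _ := abs_add_le _ _
      _ ≤ C * |Real.sin (θ₂ x - θ₁ x)| + eps := add_le_add e2 e3
  have hlim : Tendsto (fun x => (Δ x - Δ 0) / x) atTop (𝓝 (ρ lam - ρ l₀)) := by
    refine (hl₂.sub hl₁).congr fun x => ?_
    rw [hΔdef]
    ring
  have hkey := rot_key C eps hC heps Δ Δ' hΔ hbd _ hlim
  have hT := rot_T_lb C eps hC heps
  -- eps is small enough that the log bound kicks in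
  have heps' : eps < C * Real.pi / 2 * Real.exp (-(2 * C * Real.pi / ε)) := by
    have : W * |lam - l₀| < W * (C * Real.pi / 2 * Real.exp (-(2 * C * Real.pi / ε)) / W) :=
      mul_lt_mul_of_pos_left hdist hW
    rw [mul_div_cancel₀ _ hW.ne'] at this
    rw [hepsdef]
    exact this
  have hexp : Real.exp (2 * C * Real.pi / ε) ≤ C * Real.pi / (2 * eps) := by
    have hexpY : Real.exp (-(2 * C * Real.pi / ε)) * Real.exp (2 * C * Real.pi / ε) = 1 := by
      rw [← Real.exp_add]
      simp
    have h1 : eps * Real.exp (2 * C * Real.pi / ε) < C * Real.pi / 2 := by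
      calc eps * Real.exp (2 * C * Real.pi / ε)
          < C * Real.pi / 2 * Real.exp (-(2 * C * Real.pi / ε))
            * Real.exp (2 * C * Real.pi / ε) :=
            mul_lt_mul_of_pos_right heps' (Real.exp_pos _)
        _ = C * Real.pi / 2 := by rw [mul_assoc, hexpY, mul_one]
    rw [le_div_iff₀ (by positivity : (0:ℝ) < 2 * eps)]
    nlinarith
  have hlog : 2 * Real.pi / ε ≤ (1 / C) * Real.log (C * Real.pi / (2 * eps)) := by
    have h2 : 2 * C * Real.pi / ε ≤ Real.log (C * Real.pi / (2 * eps)) := by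
      rw [← Real.log_exp (2 * C * Real.pi / ε)]
      gcongr
    calc 2 * Real.pi / ε = (1 / C) * (2 * C * Real.pi / ε) := by field_simp
      _ ≤ (1 / C) * Real.log (C * Real.pi / (2 * eps)) :=
        mul_le_mul_of_nonneg_left h2 (by positivity)
  have hTbig : 2 * Real.pi / ε ≤ ∫ u in (0:ℝ)..Real.pi, (C * |Real.sin u| + eps)⁻¹ :=
    le_trans hlog hT
  have hfin : Real.pi / (∫ u in (0:ℝ)..Real.pi, (C * |Real.sin u| + eps)⁻¹)
      ≤ ε / 2 := by
    have h1 : Real.pi / (∫ u in (0:ℝ)..Real.pi, (C * |Real.sin u| + eps)⁻¹)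
        ≤ Real.pi / (2 * Real.pi / ε) :=
      div_le_div_of_nonneg_left hpi.le (by positivity) hTbig
    have h2 : Real.pi / (2 * Real.pi / ε) = ε / 2 := by
      field_simp
    linarith
  calc |ρ lam - ρ l₀| ≤ _ := hkey
    _ ≤ ε / 2 := hfin
    _ < ε := by linarith
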